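/- Let N, d ≥ 1, B > 0, ε ≥ 0, let W ∈ ℝ^{N×N} be doubly stochastic with ‖W − (1/N)𝟙𝟙ᵀ‖_* ≤ 1, let Θ ∈ ℝ^{N×d} have rows θ_1,…,θ_N with row average θ̄ and consensus error S = ∑_i ‖θ_i − θ̄‖², and let G ∈ ℝ^{N×d} have rows g_1,…,g_N with ‖g_i‖ ≤ B(‖θ_i‖+1) for all i. Set Θ' = WΘ + εG, with row average θ̄' and consensus error S'. Then, writing y = ‖θ̄‖ + √S and y' = ‖θ̄'‖ + √S', one has y' ≤ (1 + 2NεB) y + 2NεB. -/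

import Mathlib

/-- Euclidean norm of a vector in `ℝ^d` given as a plain function. -/
noncomputable def enorm' {d : ℕ} (v : Fin d → ℝ) : ℝ :=
  ‖(WithLp.equiv 2 (Fin d → ℝ)).symm v‖

/-- Spectral (ℓ₂ operator) norm of a square matrix. -/
noncomputable def specNorm {N : ℕ} (M : Matrix (Fin N) (Fin N) ℝ) : ℝ :=
  ‖Matrix.toEuclideanCLM (𝕜 := ℝ) M‖

/-- A matrix is doubly stochastic: nonnegative entries, all row sums and column sums equal 1. -/
def DoublyStochastic {N : ℕ} (W : Matrix (Fin N) (Fin N) ℝ) : Prop :=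
  (∀ i j, 0 ≤ W i j) ∧ (∀ i, ∑ j, W i j = 1) ∧ (∀ j, ∑ i, W i j = 1)

/-- Row average of a matrix `Θ ∈ ℝ^{N×d}`: `θ̄ = (1/N) Θᵀ 𝟙`. -/
noncomputable def rowAvg {N d : ℕ} (Θ : Matrix (Fin N) (Fin d) ℝ) : Fin d → ℝ :=
  fun j => (N : ℝ)⁻¹ * ∑ i, Θ i j

/-- Consensus error `S = ∑ᵢ ‖θᵢ − θ̄‖²` of a matrix of stacked iterates. -/
noncomputable def consErr {N d : ℕ} (Θ : Matrix (Fin N) (Fin d) ℝ) : ℝ :=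
  ∑ i, (enorm' (fun j => Θ i j - rowAvg Θ j)) ^ 2

/- ### Auxiliary machinery -/

/-- The identity map into Euclidean space. -/
noncomputable def ev {d : ℕ} (v : Fin d → ℝ) : EuclideanSpace ℝ (Fin d) :=
  (WithLp.equiv 2 (Fin d → ℝ)).symm v

lemma enorm_eq_ev {d : ℕ} (v : Fin d → ℝ) : enorm' v = ‖ev v‖ := rfl

lemma ev_add {d} (v w : Fin d → ℝ) : ev (fun j => v j + w j) = ev v + ev w := rfl

lemma ev_sub {d} (v w : Fin d → ℝ) : ev (fun j => v j - w j) = ev v - ev w := rfl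

lemma ev_smul {d} (c : ℝ) (v : Fin d → ℝ) : ev (fun j => c * v j) = c • ev v := rfl

lemma ev_sum {d n : ℕ} (f : Fin n → Fin d → ℝ) :
    ev (fun j => ∑ i, f i j) = ∑ i, ev (f i) := by
  induction (Finset.univ : Finset (Fin n)) using Finset.induction with
  | empty => rfl
  | insert a s h ih => simp [Finset.sum_insert h, ← ih]; rfl

lemma enorm_nonneg {d} (v : Fin d → ℝ) : 0 ≤ enorm' v := norm_nonneg _

lemma enorm_sq {d} (v : Fin d → ℝ) : enorm' v ^ 2 = ∑ j, (v j) ^ 2 := by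
  rw [enorm', PiLp.norm_sq_eq_of_L2]
  simp [Real.norm_eq_abs, sq_abs]

/-- Columns of a matrix, as a point of an `L²`-product of Euclidean spaces; its norm is
the Frobenius norm of the matrix. -/
noncomputable def cols {N d : ℕ} (X : Matrix (Fin N) (Fin d) ℝ) :
    PiLp 2 (fun _ : Fin d => EuclideanSpace ℝ (Fin N)) :=
  (WithLp.equiv 2 (∀ _ : Fin d, EuclideanSpace ℝ (Fin N))).symm
    (fun j => ev (fun i => X i j))

lemma cols_apply {N d} (X : Matrix (Fin N) (Fin d) ℝ) (j : Fin d) :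
    cols X j = ev (fun i => X i j) := rfl

lemma cols_norm {N d} (X : Matrix (Fin N) (Fin d) ℝ) :
    ‖cols X‖ = Real.sqrt (∑ i, (enorm' (fun j => X i j)) ^ 2) := by
  rw [PiLp.norm_eq_of_L2]
  congr 1
  have : ∀ j, ‖cols X j‖ ^ 2 = ∑ i, (X i j) ^ 2 := by
    intro j; rw [cols_apply, ← enorm_eq_ev, enorm_sq]
  simp_rw [this, enorm_sq]
  exact Finset.sum_comm

/-- Sum over rows of squared row-norms equals squared Frobenius norm. -/
lemma sqrt_consErr_eq {N d} (X : Matrix (Fin N) (Fin d) ℝ) :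
    Real.sqrt (consErr X) = ‖cols (Matrix.of fun i j => X i j - rowAvg X j)‖ := by
  rw [cols_norm, consErr]; rfl

/-- Frobenius norm is contracted by multiplication with a spectrally bounded matrix. -/
lemma cols_mul_norm_le {N d : ℕ} (M : Matrix (Fin N) (Fin N) ℝ)
    (X : Matrix (Fin N) (Fin d) ℝ) :
    ‖cols (M * X)‖ ≤ specNorm M * ‖cols X‖ := by
  have key : ∀ j, cols (M * X) j = Matrix.toEuclideanCLM (𝕜 := ℝ) M (cols X j) := by
    intro j
    rw [cols_apply, cols_apply, ev, ev, WithLp.equiv_symm_apply, Matrix.toEuclideanCLM_toLp]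
    congr 1
  have hle : ∀ j, ‖cols (M * X) j‖ ≤ specNorm M * ‖cols X j‖ := by
    intro j; rw [key j]
    exact (Matrix.toEuclideanCLM (𝕜 := ℝ) M).le_opNorm _
  rw [PiLp.norm_eq_of_L2, PiLp.norm_eq_of_L2]
  have hs : specNorm M = ‖Matrix.toEuclideanCLM (𝕜 := ℝ) M‖ := rfl
  have hsnn : 0 ≤ specNorm M := by rw [hs]; exact norm_nonneg _
  calc Real.sqrt (∑ j, ‖cols (M * X) j‖ ^ 2)
      ≤ Real.sqrt (∑ j, (specNorm M * ‖cols X j‖) ^ 2) := by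
        apply Real.sqrt_le_sqrt
        apply Finset.sum_le_sum
        intro j _
        exact pow_le_pow_left₀ (norm_nonneg _) (hle j) 2
    _ = specNorm M * Real.sqrt (∑ j, ‖cols X j‖ ^ 2) := by
        simp_rw [mul_pow, ← Finset.mul_sum]
        rw [Real.sqrt_mul (by positivity), Real.sqrt_sq hsnn]

/-- Triangle-type bound for `cols` of a sum `A + ε • B`. -/
lemma cols_add_smul {N d : ℕ} (A B : Matrix (Fin N) (Fin d) ℝ) (c : ℝ) :
    cols (Matrix.of fun i j => A i j + c * B i j) = cols A + c • cols B := rfl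

/-- One-step growth of `y = ‖θ̄‖ + √S`:
`y' ≤ (1 + 2NεB) y + 2NεB`. -/
theorem y_recursion_step (N d : ℕ) (hN : 1 ≤ N) (hd : 1 ≤ d)
    (B ε : ℝ) (hB : 0 < B) (hε : 0 ≤ ε)
    (W : Matrix (Fin N) (Fin N) ℝ) (hW : DoublyStochastic W)
    (hWspec : specNorm (W - (N : ℝ)⁻¹ •
      Matrix.of (fun (_ : Fin N) (_ : Fin N) => (1 : ℝ))) ≤ 1)
    (Θ G : Matrix (Fin N) (Fin d) ℝ)
    (hG : ∀ i, enorm' (fun j => G i j) ≤ B * (enorm' (fun j => Θ i j) + 1))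
    (Θ' : Matrix (Fin N) (Fin d) ℝ) (hΘ' : Θ' = W * Θ + ε • G) :
    enorm' (rowAvg Θ') + Real.sqrt (consErr Θ')
      ≤ (1 + 2 * N * ε * B) * (enorm' (rowAvg Θ) + Real.sqrt (consErr Θ))
        + 2 * N * ε * B := by
  have hNR : (1:ℝ) ≤ (N:ℝ) := by exact_mod_cast hN
  have hNpos : (0:ℝ) < N := by linarith
  have hNne : (N:ℝ) ≠ 0 := ne_of_gt hNpos
  obtain ⟨hWnn, hWrow, hWcol⟩ := hW
  set y : ℝ := enorm' (rowAvg Θ) + Real.sqrt (consErr Θ) with hy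
  have hy0 : 0 ≤ y := add_nonneg (enorm_nonneg _) (Real.sqrt_nonneg _)
  -- Step A : row average of Θ'
  have hAvg : ∀ j, rowAvg Θ' j = rowAvg Θ j + ε * rowAvg G j := by
    intro j
    simp only [rowAvg, hΘ', Matrix.add_apply, Matrix.smul_apply, smul_eq_mul]
    rw [Finset.sum_add_distrib, mul_add]
    congr 1
    · congr 1
      calc ∑ i, (W * Θ) i j = ∑ i, ∑ k, W i k * Θ k j := by
            simp [Matrix.mul_apply]
        _ = ∑ k, ∑ i, W i k * Θ k j := Finset.sum_comm
        _ = ∑ k, Θ k j := by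
            apply Finset.sum_congr rfl
            intro k _
            rw [← Finset.sum_mul, hWcol k, one_mul]
    · rw [← Finset.mul_sum]; ring
  -- per-row deviation bound : enorm' of each centered row is ≤ √S
  have hrowdev : ∀ i, enorm' (fun j => Θ i j - rowAvg Θ j) ≤ Real.sqrt (consErr Θ) := by
    intro i
    have h1 : enorm' (fun j => Θ i j - rowAvg Θ j) ^ 2 ≤ consErr Θ :=
      Finset.single_le_sum (f := fun i => enorm' (fun j => Θ i j - rowAvg Θ j) ^ 2)
        (fun i _ => sq_nonneg _) (Finset.mem_univ i)
    calc enorm' (fun j => Θ i j - rowAvg Θ j)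
        = Real.sqrt (enorm' (fun j => Θ i j - rowAvg Θ j) ^ 2) :=
          (Real.sqrt_sq (enorm_nonneg _)).symm
      _ ≤ Real.sqrt (consErr Θ) := Real.sqrt_le_sqrt h1
  -- row norms of Θ are bounded by y
  have hrowy : ∀ i, enorm' (fun j => Θ i j) ≤ y := by
    intro i
    have : ev (fun j => Θ i j) = ev (fun j => Θ i j - rowAvg Θ j) + ev (rowAvg Θ) := by
      rw [← ev_add]; congr 1; funext j; ring
    rw [enorm_eq_ev, this]
    calc ‖ev (fun j => Θ i j - rowAvg Θ j) + ev (rowAvg Θ)‖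
        ≤ ‖ev (fun j => Θ i j - rowAvg Θ j)‖ + ‖ev (rowAvg Θ)‖ := norm_add_le _ _
      _ ≤ Real.sqrt (consErr Θ) + enorm' (rowAvg Θ) := by
          rw [← enorm_eq_ev, ← enorm_eq_ev]
          exact add_le_add (hrowdev i) le_rfl
      _ = y := by rw [hy]; ring
  -- total bound on gradient row norms
  have hGsum : ∑ i, enorm' (fun j => G i j) ≤ N * B * (y + 1) := by
    calc ∑ i, enorm' (fun j => G i j)
        ≤ ∑ i, B * (enorm' (fun j => Θ i j) + 1) :=
          Finset.sum_le_sum (fun i _ => hG i)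
      _ ≤ ∑ i : Fin N, B * (y + 1) := by
          apply Finset.sum_le_sum
          intro i _
          have := hrowy i
          nlinarith [hB.le]
      _ = N * B * (y + 1) := by
          rw [Finset.sum_const, Finset.card_univ, Fintype.card_fin]
          push_cast; ring
  -- bound on the new row average
  have havg_bound : enorm' (rowAvg Θ') ≤ enorm' (rowAvg Θ) + ε * B * (y + 1) := by
    have hsplit : ev (rowAvg Θ') = ev (rowAvg Θ) + ε • ev (rowAvg G) := by
      rw [← ev_smul, ← ev_add]; congr 1; funext j; exact hAvg j
    have hgbar : enorm' (rowAvg G) ≤ (N:ℝ)⁻¹ * ∑ i, enorm' (fun j => G i j) := by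
      have : ev (rowAvg G) = (N:ℝ)⁻¹ • ev (fun j => ∑ i, G i j) := by
        rw [← ev_smul]; rfl
      rw [enorm_eq_ev, this, norm_smul, ev_sum (fun i j => G i j)]
      simp only [Real.norm_eq_abs, abs_of_nonneg (inv_nonneg.2 hNpos.le)]
      apply mul_le_mul_of_nonneg_left _ (inv_nonneg.2 hNpos.le)
      calc ‖∑ i, ev (G i)‖ ≤ ∑ i, ‖ev (G i)‖ := norm_sum_le _ _
        _ = ∑ i, enorm' (fun j => G i j) := by
            apply Finset.sum_congr rfl; intro i _; rw [enorm_eq_ev]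
    calc enorm' (rowAvg Θ') = ‖ev (rowAvg Θ) + ε • ev (rowAvg G)‖ := by
          rw [enorm_eq_ev, hsplit]
      _ ≤ ‖ev (rowAvg Θ)‖ + ‖ε • ev (rowAvg G)‖ := norm_add_le _ _
      _ = enorm' (rowAvg Θ) + ε * enorm' (rowAvg G) := by
          rw [norm_smul, Real.norm_eq_abs, abs_of_nonneg hε]; rfl
      _ ≤ enorm' (rowAvg Θ) + ε * ((N:ℝ)⁻¹ * (N * B * (y + 1))) := by
          have h1 : enorm' (rowAvg G) ≤ (N:ℝ)⁻¹ * (N * B * (y + 1)) :=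
            hgbar.trans (mul_le_mul_of_nonneg_left hGsum (inv_nonneg.2 hNpos.le))
          nlinarith
      _ = enorm' (rowAvg Θ) + ε * B * (y + 1) := by
          field_simp
  -- the centered matrices
  set M : Matrix (Fin N) (Fin N) ℝ :=
    W - (N : ℝ)⁻¹ • Matrix.of (fun (_ : Fin N) (_ : Fin N) => (1 : ℝ)) with hM
  set D : Matrix (Fin N) (Fin d) ℝ := Matrix.of fun i j => Θ i j - rowAvg Θ j with hD
  set Dg : Matrix (Fin N) (Fin d) ℝ := Matrix.of fun i j => G i j - rowAvg G j with hDg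
  -- key centered identity
  have hcent : (Matrix.of fun i j => Θ' i j - rowAvg Θ' j)
      = Matrix.of fun i j => (M * D) i j + ε * Dg i j := by
    funext i j
    simp only [Matrix.of_apply]
    rw [hAvg j]
    have hMD : (M * D) i j = (∑ k, W i k * Θ k j) - rowAvg Θ j := by
      rw [Matrix.mul_apply]
      have : ∀ k, M i k * D k j
          = W i k * Θ k j - W i k * rowAvg Θ j
            - ((N:ℝ)⁻¹ * Θ k j - (N:ℝ)⁻¹ * rowAvg Θ j) := by
        intro k
        simp only [hM, hD, Matrix.sub_apply, Matrix.smul_apply, Matrix.of_apply,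
          smul_eq_mul, mul_one]
        ring
      rw [Finset.sum_congr rfl (fun k _ => this k)]
      have h1 : ∑ k, W i k * rowAvg Θ j = rowAvg Θ j := by
        rw [← Finset.sum_mul, hWrow i, one_mul]
      have h2 : ∑ k, (N:ℝ)⁻¹ * Θ k j = rowAvg Θ j := by
        rw [← Finset.mul_sum]; rfl
      have h3 : ∑ k : Fin N, (N:ℝ)⁻¹ * rowAvg Θ j = rowAvg Θ j := by
        rw [Finset.sum_const, Finset.card_univ, Fintype.card_fin, nsmul_eq_mul]
        field_simp
      simp only [Finset.sum_sub_distrib]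
      rw [h1, h2, h3]
      ring
    have hrow' : Θ' i j = (∑ k, W i k * Θ k j) + ε * G i j := by
      rw [hΘ']; simp [Matrix.add_apply, Matrix.mul_apply, Matrix.smul_apply]
    rw [hMD, hrow']
    simp only [hDg, Matrix.of_apply]
    ring
  -- bound √S'
  have hS'bound : Real.sqrt (consErr Θ')
      ≤ Real.sqrt (consErr Θ) + ε * (N * B * (y + 1)) := by
    rw [sqrt_consErr_eq, hcent, cols_add_smul]
    have hDgnorm : ‖cols Dg‖ ≤ N * B * (y + 1) := by
      -- projection step: ∑ ‖gᵢ - ḡ‖² ≤ ∑ ‖gᵢ‖²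
      have hproj : ∑ i, (enorm' (fun j => G i j - rowAvg G j)) ^ 2
          ≤ ∑ i, (enorm' (fun j => G i j)) ^ 2 := by
        have hm : ∑ i, ev (fun j => G i j) = (N:ℝ) • ev (rowAvg G) := by
          rw [← ev_sum (fun i j => G i j), ← ev_smul]
          congr 1; funext j
          simp only [rowAvg]
          field_simp
        have expand : ∀ i : Fin N, (enorm' (fun j => G i j - rowAvg G j)) ^ 2
            = ‖ev (fun j => G i j)‖^2
              - 2 * (inner ℝ (ev (fun j => G i j)) (ev (rowAvg G)) : ℝ)
              + ‖ev (rowAvg G)‖^2 := by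
          intro i
          rw [enorm_eq_ev, ev_sub]
          exact norm_sub_sq_real _ _
        rw [Finset.sum_congr rfl (fun i _ => expand i)]
        rw [Finset.sum_add_distrib, Finset.sum_sub_distrib]
        rw [← Finset.mul_sum]
        rw [← sum_inner, hm]
        rw [real_inner_smul_left, real_inner_self_eq_norm_sq]
        rw [Finset.sum_const, Finset.card_univ, Fintype.card_fin, nsmul_eq_mul]
        have : ∀ i : Fin N, ‖ev (fun j => G i j)‖ ^ 2 = (enorm' (fun j => G i j))^2 := by
          intro i; rw [enorm_eq_ev]
        rw [Finset.sum_congr rfl (fun i _ => this i)]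
        nlinarith [sq_nonneg ‖ev (rowAvg G)‖]
      rw [cols_norm]
      calc Real.sqrt (∑ i, (enorm' fun j => Dg i j) ^ 2)
          ≤ Real.sqrt (∑ i, (enorm' (fun j => G i j)) ^ 2) := by
            apply Real.sqrt_le_sqrt
            simpa [hDg] using hproj
        _ ≤ Real.sqrt ((∑ i, enorm' (fun j => G i j)) ^ 2) := by
            apply Real.sqrt_le_sqrt
            exact Finset.sum_sq_le_sq_sum_of_nonneg (fun i _ => enorm_nonneg _)
        _ = ∑ i, enorm' (fun j => G i j) := by
            exact Real.sqrt_sq (Finset.sum_nonneg fun i _ => enorm_nonneg _)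
        _ ≤ N * B * (y + 1) := hGsum
    have hMDnorm : ‖cols (M * D)‖ ≤ Real.sqrt (consErr Θ) := by
      calc ‖cols (M * D)‖ ≤ specNorm M * ‖cols D‖ := cols_mul_norm_le M D
        _ ≤ 1 * ‖cols D‖ := by
            apply mul_le_mul_of_nonneg_right hWspec (norm_nonneg _)
        _ = Real.sqrt (consErr Θ) := by rw [one_mul, hD, ← sqrt_consErr_eq]
    calc ‖cols (M * D) + ε • cols Dg‖
        ≤ ‖cols (M * D)‖ + ‖ε • cols Dg‖ := norm_add_le _ _
      _ ≤ Real.sqrt (consErr Θ) + ε * (N * B * (y + 1)) := by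
          rw [norm_smul, Real.norm_eq_abs, abs_of_nonneg hε]
          exact add_le_add hMDnorm
            (mul_le_mul_of_nonneg_left hDgnorm hε)
  -- final assembly
  have key : enorm' (rowAvg Θ') + Real.sqrt (consErr Θ')
      ≤ y + ε * B * (y + 1) * (1 + N) := by
    calc enorm' (rowAvg Θ') + Real.sqrt (consErr Θ')
        ≤ (enorm' (rowAvg Θ) + ε * B * (y + 1))
          + (Real.sqrt (consErr Θ) + ε * (N * B * (y + 1))) :=
          add_le_add havg_bound hS'bound
      _ = y + ε * B * (y + 1) * (1 + N) := by rw [hy]; ring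
  have h2N : (1:ℝ) + N ≤ 2 * N := by linarith
  have hfac : 0 ≤ ε * B * (y + 1) := by positivity
  calc enorm' (rowAvg Θ') + Real.sqrt (consErr Θ')
      ≤ y + ε * B * (y + 1) * (1 + N) := key
    _ ≤ y + ε * B * (y + 1) * (2 * N) := by nlinarith
    _ = (1 + 2 * N * ε * B) * y + 2 * N * ε * B := by ring
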